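/- Consider the model under constant maximum tolerated dose D ≡ D₀ with γ > 1. Let (S,R) be a solution on [0, T] with S(t) > 0 and S(t) + α·R(t) ≤ K for all t ∈ [0, T]. Then dS/dt ≤ −d_S·S along the solution, and consequently S(t) ≤ S(0)·exp(−d_S·t) for all t ∈ [0, T]. -/

import Mathlib

/-- under constant maximum tolerated dose `D ≡ D₀` with `γ > 1`
(so the suppression factor is `1 - γ < 0`), any solution with `S > 0` and
`S + α·R ≤ K` on `[0,T]` satisfies `dS/dt ≤ -d_S·S` along the trajectory, and
consequently `S(t) ≤ S(0)·exp(-d_S·t)` for all `t ∈ [0,T]`. -/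
theorem stmt_13 (K rS rR dS dR α β γ T : ℝ) (S R : ℝ → ℝ)
    (hK : 0 < K) (hrS : 0 < rS) (hrR : 0 < rR) (hdS : 0 < dS) (hdR : 0 < dR)
    (hα : 0 < α) (hβ : 0 < β) (hγ : 1 < γ) (hT : 0 ≤ T)
    (hSode : ∀ t ∈ Set.Icc 0 T,
      HasDerivAt S (rS * (1 - (S t + α * R t) / K) * (1 - γ) * S t - dS * S t) t)
    (hSpos : ∀ t ∈ Set.Icc 0 T, 0 < S t)
    (hcap : ∀ t ∈ Set.Icc 0 T, S t + α * R t ≤ K) :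
    (∀ t ∈ Set.Icc 0 T,
      rS * (1 - (S t + α * R t) / K) * (1 - γ) * S t - dS * S t ≤ -dS * S t) ∧
    (∀ t ∈ Set.Icc 0 T, S t ≤ S 0 * Real.exp (-dS * t)) := by
  have key : ∀ t ∈ Set.Icc 0 T,
      rS * (1 - (S t + α * R t) / K) * (1 - γ) * S t ≤ 0 := by
    intro t ht
    have h1 : 0 ≤ 1 - (S t + α * R t) / K := by
      rw [sub_nonneg, div_le_one hK]; exact hcap t ht
    have h2 : 0 ≤ rS * (1 - (S t + α * R t) / K) * S t :=
      mul_nonneg (mul_nonneg hrS.le h1) (hSpos t ht).le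
    nlinarith [h2]
  set g : ℝ → ℝ := fun t => S t * Real.exp (dS * t) with hg_def
  have hg : ∀ t ∈ Set.Icc 0 T,
      HasDerivAt g ((rS * (1 - (S t + α * R t) / K) * (1 - γ) * S t)
        * Real.exp (dS * t)) t := by
    intro t ht
    have he : HasDerivAt (fun t => Real.exp (dS * t))
        (Real.exp (dS * t) * (dS * 1)) t := ((hasDerivAt_id t).const_mul dS).exp
    have := (hSode t ht).mul he
    refine this.congr_deriv ?_
    ring
  have hcont : ContinuousOn g (Set.Icc 0 T) :=
    fun t ht => (hg t ht).continuousAt.continuousWithinAt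
  have hint : interior (Set.Icc (0:ℝ) T) ⊆ Set.Icc 0 T := interior_subset
  have hdiff : DifferentiableOn ℝ g (interior (Set.Icc 0 T)) :=
    fun t ht => ((hg t (hint ht)).differentiableAt).differentiableWithinAt
  have hderiv : ∀ t ∈ interior (Set.Icc (0:ℝ) T), deriv g t ≤ 0 := by
    intro t ht
    rw [(hg t (hint ht)).deriv]
    exact mul_nonpos_of_nonpos_of_nonneg (key t (hint ht)) (Real.exp_pos _).le
  have hmono := antitoneOn_of_deriv_nonpos (convex_Icc 0 T) hcont hdiff hderiv
  refine ⟨fun t ht => by linarith [key t ht], fun t ht => ?_⟩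
  have h2 : S t * Real.exp (dS * t) ≤ S 0 := by
    have := hmono ⟨le_refl 0, hT⟩ ht ht.1
    simpa [hg_def, mul_zero] using this
  have h3 : S 0 * Real.exp (-dS * t) = S 0 / Real.exp (dS * t) := by
    rw [neg_mul, Real.exp_neg, div_eq_mul_inv]
  rw [h3, le_div_iff₀ (Real.exp_pos _)]
  exact h2
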